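/- The perpetual defaultable American put price function P satisfies: (i) P is continuous on (0,∞), and smooth fit holds at b*: lim_{s↓b*} P(s) = K − b* and lim_{s↓b*} P′(s) = −1; (ii) on (b*, ∞), P solves the ODE (σ²s²/2)·P″(s) + (r+λ)·s·P′(s) − (r+λ)·P(s) + λK = 0; (iii) on (0, b*), the value K − s satisfies (r+λ)·s·(−1) − (r+λ)·(K−s) + λK = −rK ≤ 0; and (iv) P(s) ≥ (K − s)⁺ for all s > 0, with equality exactly for s ≤ b*. -/

import Mathlib

open Real Filter

/-- `θ = 2(r+λ)/σ²`. -/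
noncomputable def perpTheta (r lam sigma : ℝ) : ℝ := 2 * (r + lam) / sigma ^ 2

/-- Optimal exercise threshold `b* = 2rK/(2(r+λ) + σ²)`. -/
noncomputable def perpBstar (r lam sigma K : ℝ) : ℝ := 2 * r * K / (2 * (r + lam) + sigma ^ 2)

/-- Market price of a perpetual American put (strike `K`) on a defaultable stock
with constant default intensity `λ`:
`P(s) = K − s` for `0 < s ≤ b*`, and
`P(s) = (rK/((r+λ)(θ+1)))·(s/b*)^{−θ} + λK/(r+λ)` for `s > b*`. -/
noncomputable def perpPut (r lam sigma K s : ℝ) : ℝ :=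
  if s ≤ perpBstar r lam sigma K then K - s
  else (r * K / ((r + lam) * (perpTheta r lam sigma + 1)))
        * (s / perpBstar r lam sigma K) ^ (-(perpTheta r lam sigma)) + lam * K / (r + lam)

/-- Bernoulli-type inequality for negative exponents: for `x > 1` and `θ > 0`,
`1 - θ(x-1) < x^(-θ)`. -/
lemma bernoulli_neg_aux {θ x : ℝ} (hθ : 0 < θ) (hx : 1 < x) :
    1 - θ * (x - 1) < x ^ (-θ) := by
  have key : StrictMonoOn (fun y : ℝ => y ^ (-θ) + θ * y) (Set.Ici 1) := by
    apply strictMonoOn_of_deriv_pos (convex_Ici 1)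
    · apply ContinuousOn.add
      · apply ContinuousOn.rpow_const continuousOn_id
        intro y hy
        exact Or.inl (by simp only [Set.mem_Ici] at hy; positivity)
      · exact (continuous_const.mul continuous_id).continuousOn
    · intro y hy
      rw [interior_Ici] at hy
      have hy1 : (1 : ℝ) < y := hy
      have hd : HasDerivAt (fun y : ℝ => y ^ (-θ) + θ * y) (-θ * y ^ (-θ - 1) + θ * 1) y := by
        exact (Real.hasDerivAt_rpow_const (Or.inl (by positivity))).add
          ((hasDerivAt_id y).const_mul θ)
      rw [hd.deriv]
      have hlt : y ^ (-θ - 1) < 1 :=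
        Real.rpow_lt_one_of_one_lt_of_neg hy1 (by linarith)
      nlinarith [Real.rpow_pos_of_pos (lt_trans one_pos hy1) (-θ - 1)]
  have h := key (Set.self_mem_Ici) (Set.mem_Ici.mpr hx.le) hx
  simp only [Real.one_rpow] at h
  nlinarith [h]

/-- **Properties of the perpetual defaultable American put price (eq. (3.20)).**
(i) `P` is continuous on `(0,∞)` and smooth fit holds at `b*`:
`lim_{s↓b*} P(s) = K − b*` and `lim_{s↓b*} P′(s) = −1`;
(ii) on `(b*,∞)`, `P` solves `(σ²s²/2)P″ + (r+λ)sP′ − (r+λ)P + λK = 0`;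
(iii) on `(0,b*)`, the value `K − s` satisfies
`(r+λ)s(−1) − (r+λ)(K−s) + λK = −rK ≤ 0`;
(iv) `P(s) ≥ (K − s)⁺` for all `s > 0`, with equality exactly for `s ≤ b*`. -/
theorem perpPut_properties
    (r lam sigma K : ℝ) (hr : 0 < r) (hlam : 0 ≤ lam) (hsigma : 0 < sigma) (hK : 0 < K) :
    (ContinuousOn (fun s => perpPut r lam sigma K s) (Set.Ioi 0)
      ∧ Tendsto (fun s => perpPut r lam sigma K s)
          (nhdsWithin (perpBstar r lam sigma K) (Set.Ioi (perpBstar r lam sigma K)))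
          (nhds (K - perpBstar r lam sigma K))
      ∧ Tendsto (deriv (fun s => perpPut r lam sigma K s))
          (nhdsWithin (perpBstar r lam sigma K) (Set.Ioi (perpBstar r lam sigma K)))
          (nhds (-1)))
    ∧ (∀ s ∈ Set.Ioi (perpBstar r lam sigma K),
        sigma ^ 2 * s ^ 2 / 2 * deriv (deriv (fun x => perpPut r lam sigma K x)) s
          + (r + lam) * s * deriv (fun x => perpPut r lam sigma K x) s
          - (r + lam) * perpPut r lam sigma K s + lam * K = 0)
    ∧ (∀ s ∈ Set.Ioo 0 (perpBstar r lam sigma K),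
        (r + lam) * s * (-1) - (r + lam) * (K - s) + lam * K = -(r * K) ∧ -(r * K) ≤ 0)
    ∧ (∀ s ∈ Set.Ioi (0 : ℝ),
        max (K - s) 0 ≤ perpPut r lam sigma K s
          ∧ (perpPut r lam sigma K s = max (K - s) 0 ↔ s ≤ perpBstar r lam sigma K)) := by
  
  have hrl : (0:ℝ) < r + lam := by linarith
  have hσ2 : (0:ℝ) < sigma ^ 2 := by positivity
  set θ := perpTheta r lam sigma with hθdef
  set b := perpBstar r lam sigma K with hbdef
  have hθ : 0 < θ := by rw [hθdef, perpTheta]; positivity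
  have hθ1 : 0 < θ + 1 := by linarith
  have hb : 0 < b := by rw [hbdef, perpBstar]; positivity
  have hbne : b ≠ 0 := ne_of_gt hb
  have hbK : b < K := by
    rw [hbdef, perpBstar, div_lt_iff₀ (by positivity)]
    nlinarith
  set A := r * K / ((r + lam) * (θ + 1)) with hAdef
  set C := lam * K / (r + lam) with hCdef
  have hA : 0 < A := div_pos (by positivity) (mul_pos hrl hθ1)
  have hC : 0 ≤ C := div_nonneg (by positivity) hrl.le
  have hAθ : A * θ = b := by
    rw [hAdef, hθdef, hbdef, perpTheta, perpBstar]
    field_simp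
  have hACb : A + C = K - b := by
    rw [hAdef, hCdef, hθdef, hbdef, perpTheta, perpBstar]
    field_simp
    ring
  have hσθ : sigma ^ 2 * θ = 2 * (r + lam) := by
    rw [hθdef, perpTheta]; field_simp
  have hCrl : C * (r + lam) = lam * K := by
    rw [hCdef]; field_simp
  -- the smooth branch
  set g : ℝ → ℝ := fun x => A * (x / b) ^ (-θ) + C with hgdef
  set D : ℝ → ℝ := fun x => A * -θ * b⁻¹ * (x / b) ^ (-θ - 1) with hDdef
  set D2 : ℝ → ℝ := fun x => A * -θ * b⁻¹ * (-θ - 1) * b⁻¹ * (x / b) ^ (-θ - 1 - 1) with hD2def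
  have hPle : ∀ s : ℝ, s ≤ b → perpPut r lam sigma K s = K - s := by
    intro s hs
    rw [perpPut, ← hθdef, ← hbdef, if_pos hs]
  have hPgt : ∀ s : ℝ, b < s → perpPut r lam sigma K s = g s := by
    intro s hs
    rw [perpPut, ← hθdef, ← hbdef, if_neg (not_le.mpr hs), hgdef, ← hAdef, ← hCdef]
  have hdiv : ∀ s : ℝ, 0 < s → HasDerivAt (fun x : ℝ => x / b) b⁻¹ s := by
    intro s _
    simpa using (hasDerivAt_id s).div_const b
  have hg' : ∀ s : ℝ, 0 < s → HasDerivAt g (D s) s := by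
    intro s hs
    have hy : (0:ℝ) < s / b := div_pos hs hb
    have h2 : HasDerivAt (fun y : ℝ => y ^ (-θ)) (-θ * (s / b) ^ (-θ - 1)) (s / b) :=
      Real.hasDerivAt_rpow_const (Or.inl (ne_of_gt hy))
    have h3 := ((h2.comp s (hdiv s hs)).const_mul A).add_const C
    refine h3.congr_deriv ?_
    simp only [hDdef]
    ring
  have hD' : ∀ s : ℝ, 0 < s → HasDerivAt D (D2 s) s := by
    intro s hs
    have hy : (0:ℝ) < s / b := div_pos hs hb
    have h2 : HasDerivAt (fun y : ℝ => y ^ (-θ - 1)) ((-θ - 1) * (s / b) ^ (-θ - 1 - 1)) (s / b) :=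
      Real.hasDerivAt_rpow_const (Or.inl (ne_of_gt hy))
    have h3 := (h2.comp s (hdiv s hs)).const_mul (A * -θ * b⁻¹)
    refine h3.congr_deriv ?_
    simp only [hD2def]
    ring
  have hPg_ev : ∀ s ∈ Set.Ioi b, (fun x => perpPut r lam sigma K x) =ᶠ[nhds s] g := by
    intro s hs
    filter_upwards [isOpen_Ioi.mem_nhds hs] with x hx
    exact hPgt x hx
  have hderivP : ∀ s ∈ Set.Ioi b, deriv (fun x => perpPut r lam sigma K x) s = D s := by
    intro s hs
    rw [(hPg_ev s hs).deriv_eq, (hg' s (hb.trans hs)).deriv]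
  have hderiv2P : ∀ s ∈ Set.Ioi b,
      deriv (deriv (fun x => perpPut r lam sigma K x)) s = D2 s := by
    intro s hs
    have hev : deriv (fun x => perpPut r lam sigma K x) =ᶠ[nhds s] D := by
      filter_upwards [isOpen_Ioi.mem_nhds hs] with x hx
      exact hderivP x hx
    rw [hev.deriv_eq, (hD' s (hb.trans hs)).deriv]
  have hgb : g b = K - b := by
    simp only [hgdef, div_self hbne, Real.one_rpow, mul_one]
    exact hACb
  have hDb : D b = -1 := by
    simp only [hDdef, div_self hbne, Real.one_rpow, mul_one]
    field_simp
    linarith [hAθ]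
  -- smooth fit: value limit
  have hT1 : Tendsto (fun s => perpPut r lam sigma K s)
      (nhdsWithin b (Set.Ioi b)) (nhds (K - b)) := by
    have hgc : Tendsto g (nhdsWithin b (Set.Ioi b)) (nhds (K - b)) := by
      rw [← hgb]
      exact ((hg' b hb).continuousAt.continuousWithinAt).tendsto
    apply hgc.congr'
    filter_upwards [self_mem_nhdsWithin] with x hx
    exact (hPgt x hx).symm
  -- smooth fit: derivative limit
  have hT2 : Tendsto (deriv (fun s => perpPut r lam sigma K s))
      (nhdsWithin b (Set.Ioi b)) (nhds (-1)) := by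
    have hDc : Tendsto D (nhdsWithin b (Set.Ioi b)) (nhds (-1)) := by
      rw [← hDb]
      exact ((hD' b hb).continuousAt.continuousWithinAt).tendsto
    apply hDc.congr'
    filter_upwards [self_mem_nhdsWithin] with x hx
    exact (hderivP x hx).symm
  refine ⟨⟨?_, hT1, hT2⟩, ?_, ?_, ?_⟩
  · -- continuity on (0, ∞)
    intro s hs
    simp only [Set.mem_Ioi] at hs
    rcases lt_trichotomy s b with h | h | h
    · apply ContinuousAt.continuousWithinAt
      apply ContinuousAt.congr ((continuous_const.sub continuous_id).continuousAt (x := s))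
      filter_upwards [isOpen_Iio.mem_nhds h] with x hx
      exact (hPle x (le_of_lt hx)).symm
    · have c1 : ContinuousWithinAt (fun x => perpPut r lam sigma K x) (Set.Iic b) b := by
        apply ContinuousWithinAt.congr
          ((continuous_const.sub continuous_id).continuousWithinAt (x := b) (s := Set.Iic b))
        · intro x hx
          exact hPle x hx
        · exact hPle b le_rfl
      have c2 : ContinuousWithinAt (fun x => perpPut r lam sigma K x) (Set.Ioi b) b := by
        rw [ContinuousWithinAt, hPle b le_rfl]
        exact hT1
      have hsub : Set.Ioi (0:ℝ) ⊆ Set.Iic b ∪ Set.Ioi b := fun x _ => le_or_gt x b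
      have := (c1.union c2).mono hsub
      rw [h]
      exact this
    · apply ContinuousAt.continuousWithinAt
      apply ContinuousAt.congr (hg' s (hb.trans h)).continuousAt
      filter_upwards [isOpen_Ioi.mem_nhds h] with x hx
      exact (hPgt x hx).symm
  · -- the ODE on (b, ∞)
    intro s hs
    have hsb : b < s := hs
    have hs0 : 0 < s := hb.trans hsb
    have hy : (0:ℝ) < s / b := div_pos hs0 hb
    rw [hderiv2P s hs, hderivP s hs, hPgt s hsb]
    have e1 : (s / b) ^ (-θ - 1) = (s / b) ^ (-θ) / (s / b) := by
      rw [Real.rpow_sub hy, Real.rpow_one]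
    have e2 : (s / b) ^ (-θ - 1 - 1) = (s / b) ^ (-θ) / (s / b) ^ 2 := by
      rw [show -θ - 1 - 1 = -θ - 2 by ring, Real.rpow_sub hy,
        show (2:ℝ) = ((2:ℕ):ℝ) by norm_num, Real.rpow_natCast]
    simp only [hD2def, hDdef, hgdef, e1, e2]
    have hu : (0:ℝ) < (s / b) ^ (-θ) := Real.rpow_pos_of_pos hy _
    clear_value g D D2 A C
    field_simp
    linear_combination (A * (s / b) ^ (-θ) * (θ + 1)) * hσθ
      - 2 * hCrl
  · -- value of the generator on the exercise region
    intro s _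
    constructor
    · ring
    · nlinarith
  · -- dominates the payoff, with equality iff s ≤ b
    intro s hs
    simp only [Set.mem_Ioi] at hs
    by_cases hsb : s ≤ b
    · have h1 : perpPut r lam sigma K s = K - s := hPle s hsb
      have h2 : max (K - s) 0 = K - s := max_eq_left (by linarith)
      rw [h1, h2]
      exact ⟨le_rfl, ⟨fun _ => hsb, fun _ => rfl⟩⟩
    · push_neg at hsb
      have hx : (1:ℝ) < s / b := (one_lt_div hb).mpr hsb
      have hu : (0:ℝ) < (s / b) ^ (-θ) := Real.rpow_pos_of_pos (lt_trans one_pos hx) _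
      have hbern := bernoulli_neg_aux hθ hx
      have hsb' : b * (s / b) = s := by field_simp
      have hP : perpPut r lam sigma K s = A * (s / b) ^ (-θ) + C := hPgt s hsb
      have hlt : max (K - s) 0 < perpPut r lam sigma K s := by
        rw [hP]
        apply max_lt
        · have := mul_lt_mul_of_pos_left hbern hA
          nlinarith [hAθ, hACb, hsb']
        · have := mul_pos hA hu
          linarith
      exact ⟨hlt.le, ⟨fun h => absurd h.symm hlt.ne, fun h => absurd h (not_le.mpr hsb)⟩⟩
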